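/- Let p and q be distinct nonconstant rational functions on the Riemann sphere (i.e., nonconstant elements of ℂ(z) with p ≠ q), and let S = {α ∈ ℂ∞ : p⁻¹(α) = q⁻¹(α)}. Then (|S| − 2)·max(deg p, deg q) ≤ −2 + deg p + deg q; in particular |S| ≤ 3. -/

import Mathlib

open OnePoint Polynomial

/-- The degree of a rational function as a branched covering of the Riemann sphere:
the maximum of the degrees of its (coprime) numerator and denominator. -/
noncomputable def ratDeg (f : RatFunc ℂ) : ℕ := max f.num.natDegree f.denom.natDegree

/-- Evaluation of a rational function as a self-map of the Riemann sphere `OnePoint ℂ`. -/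
noncomputable def evalSphere (f : RatFunc ℂ) : OnePoint ℂ → OnePoint ℂ :=
  OnePoint.rec
    (if f.denom.degree < f.num.degree then ∞
     else if f.num.degree < f.denom.degree then (((0 : ℂ)) : OnePoint ℂ)
     else ((f.num.leadingCoeff / f.denom.leadingCoeff : ℂ) : OnePoint ℂ))
    (fun z => if f.denom.eval z = 0 then ∞
     else ((f.num.eval z / f.denom.eval z : ℂ) : OnePoint ℂ))

namespace Stmt10Aux

open scoped Classical

/-- The "fiber polynomial" of `f` over a point `α` of the sphere. -/
noncomputable def fpoly (f : RatFunc ℂ) : OnePoint ℂ → ℂ[X] :=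
  OnePoint.rec f.denom (fun a => f.num - Polynomial.C a * f.denom)

/-- The Wronskian of the numerator and denominator. -/
noncomputable def wron (f : RatFunc ℂ) : ℂ[X] :=
  derivative f.num * f.denom - f.num * derivative f.denom

lemma evalSphere_coe (f : RatFunc ℂ) (z : ℂ) :
    evalSphere f z = if f.denom.eval z = 0 then ∞
      else ((f.num.eval z / f.denom.eval z : ℂ) : OnePoint ℂ) := rfl

lemma evalSphere_inftyv (f : RatFunc ℂ) :
    evalSphere f ∞ = if f.denom.degree < f.num.degree then ∞
     else if f.num.degree < f.denom.degree then (((0 : ℂ)) : OnePoint ℂ)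
     else ((f.num.leadingCoeff / f.denom.leadingCoeff : ℂ) : OnePoint ℂ) := rfl

lemma fpoly_coe (f : RatFunc ℂ) (a : ℂ) :
    fpoly f a = f.num - Polynomial.C a * f.denom := rfl

lemma fpoly_infty (f : RatFunc ℂ) : fpoly f ∞ = f.denom := rfl

variable {f : RatFunc ℂ}

lemma eq_C_of_ratDeg_eq_zero (h : ratDeg f = 0) : ∃ c : ℂ, f = RatFunc.C c := by
  have hnum : f.num.natDegree = 0 := by
    have := le_max_left f.num.natDegree f.denom.natDegree
    unfold ratDeg at h; omega
  have hden : f.denom.natDegree = 0 := by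
    have := le_max_right f.num.natDegree f.denom.natDegree
    unfold ratDeg at h; omega
  have hd1 : f.denom = 1 := (f.monic_denom.natDegree_eq_zero).mp hden
  set c := f.num.coeff 0 with hc
  have h2 := RatFunc.num_div_denom f
  rw [hd1, map_one, div_one, Polynomial.eq_C_of_natDegree_eq_zero hnum, ← hc] at h2
  exact ⟨c, by rw [← h2, RatFunc.algebraMap_C]⟩

lemma one_le_ratDeg (hfc : ¬ ∃ c : ℂ, f = RatFunc.C c) : 1 ≤ ratDeg f := by
  rcases Nat.eq_zero_or_pos (ratDeg f) with h | h
  · exact absurd (eq_C_of_ratDeg_eq_zero h) hfc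
  · exact h

lemma num_ne_zero (hfc : ¬ ∃ c : ℂ, f = RatFunc.C c) : f.num ≠ 0 := by
  intro h
  apply hfc
  have h2 := RatFunc.num_div_denom f
  rw [h, map_zero, zero_div] at h2
  exact ⟨0, by rw [← h2, ← RatFunc.algebraMap_C (0:ℂ), map_zero, map_zero]⟩

lemma eval_not_both (f : RatFunc ℂ) (z : ℂ) :
    ¬ (f.num.eval z = 0 ∧ f.denom.eval z = 0) := by
  rintro ⟨h1, h2⟩
  obtain ⟨a, b, hab⟩ := f.isCoprime_num_denom
  have := congrArg (Polynomial.eval z) hab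
  simp [h1, h2] at this

lemma natDegree_fpoly_le (f : RatFunc ℂ) (α : OnePoint ℂ) :
    (fpoly f α).natDegree ≤ ratDeg f := by
  induction α using OnePoint.rec with
  | infty => exact le_max_right _ _
  | coe a =>
    refine (Polynomial.natDegree_sub_le _ _).trans ?_
    simp only [max_le_iff]
    refine ⟨le_max_left _ _, (Polynomial.natDegree_C_mul_le _ _).trans (le_max_right _ _)⟩

lemma fpoly_ne_zero (hfc : ¬ ∃ c : ℂ, f = RatFunc.C c) (α : OnePoint ℂ) :
    fpoly f α ≠ 0 := by
  induction α using OnePoint.rec with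
  | infty => exact f.denom_ne_zero
  | coe a =>
    rw [fpoly_coe, sub_ne_zero]
    intro h
    have hdvd : f.denom ∣ f.num := ⟨Polynomial.C a, by rw [h, mul_comm]⟩
    have hunit : IsUnit f.denom := f.isCoprime_num_denom.symm.isUnit_of_dvd' dvd_rfl hdvd
    have hden : f.denom.natDegree = 0 := Polynomial.natDegree_eq_zero_of_isUnit hunit
    have hnum : f.num.natDegree = 0 := by
      have h1 : f.num.natDegree ≤ f.denom.natDegree := by
        rw [h]; exact Polynomial.natDegree_C_mul_le _ _
      omega
    have : ratDeg f = 0 := by unfold ratDeg; omega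
    exact absurd (eq_C_of_ratDeg_eq_zero this) hfc

lemma mem_fiber_coe (f : RatFunc ℂ) (z : ℂ) (α : OnePoint ℂ) :
    (z : OnePoint ℂ) ∈ evalSphere f ⁻¹' {α} ↔ (fpoly f α).eval z = 0 := by
  rw [Set.mem_preimage, Set.mem_singleton_iff, evalSphere_coe]
  induction α using OnePoint.rec with
  | infty =>
    rw [fpoly_infty]
    by_cases h : f.denom.eval z = 0 <;> simp [h, OnePoint.coe_ne_infty]
  | coe a =>
    rw [fpoly_coe]
    by_cases h : f.denom.eval z = 0
    · simp only [h, if_pos]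
      constructor
      · intro h'; exact absurd h' (OnePoint.infty_ne_coe a)
      · intro h'
        simp only [Polynomial.eval_sub, Polynomial.eval_mul, Polynomial.eval_C, h,
          mul_zero, sub_zero] at h'
        exact absurd ⟨h', h⟩ (eval_not_both f z)
    · simp only [h, if_neg, not_false_iff, OnePoint.coe_eq_coe]
      rw [div_eq_iff h]
      simp only [Polynomial.eval_sub, Polynomial.eval_mul, Polynomial.eval_C, sub_eq_zero]

lemma natDegree_lt_iff_coeff {g : ℂ[X]} {D : ℕ} (hg : g.natDegree ≤ D) (hD : 1 ≤ D) :
    g.natDegree < D ↔ g.coeff D = 0 := by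
  constructor
  · exact fun h => Polynomial.coeff_eq_zero_of_natDegree_lt h
  · intro h
    rcases lt_or_eq_of_le hg with h' | h'
    · exact h'
    · exfalso
      have hg0 : g ≠ 0 := by intro h0; rw [h0] at h'; simp at h'; omega
      rw [← h'] at h
      exact Polynomial.leadingCoeff_ne_zero.mpr hg0 (by rwa [Polynomial.coeff_natDegree] at h)

lemma evalSphere_infty_eq_iff (hfc : ¬ ∃ c : ℂ, f = RatFunc.C c) (α : OnePoint ℂ) :
    evalSphere f ∞ = α ↔ (fpoly f α).natDegree < ratDeg f := by
  have hD : 1 ≤ ratDeg f := one_le_ratDeg hfc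
  have hden : f.denom ≠ 0 := f.denom_ne_zero
  rw [evalSphere_inftyv]
  induction α using OnePoint.rec with
  | infty =>
    rw [fpoly_infty]
    have h2 : f.denom.natDegree < ratDeg f ↔ f.denom.natDegree < f.num.natDegree := by
      unfold ratDeg
      rcases max_cases f.num.natDegree f.denom.natDegree with ⟨h1, _⟩ | ⟨h1, _⟩ <;> rw [h1] <;> omega
    rw [h2, Polynomial.natDegree_lt_natDegree_iff hden]
    by_cases h : f.denom.degree < f.num.degree
    · simp [h]
    · rw [if_neg h]
      constructor
      · intro h''
        by_cases h' : f.num.degree < f.denom.degree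
        · rw [if_pos h'] at h''; exact absurd h'' (OnePoint.coe_ne_infty 0)
        · rw [if_neg h'] at h''; exact absurd h'' (OnePoint.coe_ne_infty _)
      · intro h''; exact absurd h'' h
  | coe a =>
    rw [natDegree_lt_iff_coeff (natDegree_fpoly_le f a) hD, fpoly_coe]
    rw [Polynomial.coeff_sub, Polynomial.coeff_C_mul]
    by_cases h : f.denom.degree < f.num.degree
    · -- value is ∞, never equals a; and coeff is leading coeff of num
      have hnum0 : f.num ≠ 0 := by
        intro h0; rw [h0] at h; simp only [Polynomial.degree_zero] at h
        exact absurd (lt_of_lt_of_le h bot_le) (lt_irrefl _)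
      have hlt : f.denom.natDegree < f.num.natDegree :=
        (Polynomial.natDegree_lt_natDegree_iff hden).mpr h
      have hDn : ratDeg f = f.num.natDegree := by unfold ratDeg; omega
      rw [if_pos h, hDn]
      have hc1 : f.num.coeff f.num.natDegree = f.num.leadingCoeff := Polynomial.coeff_natDegree
      have hc2 : f.denom.coeff f.num.natDegree = 0 :=
        Polynomial.coeff_eq_zero_of_natDegree_lt hlt
      rw [hc1, hc2, mul_zero, sub_zero]
      rw [Polynomial.leadingCoeff_eq_zero]
      simp only [hnum0, iff_false]
      exact fun h' => (OnePoint.infty_ne_coe a) h'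
    · rw [if_neg h]
      by_cases h' : f.num.degree < f.denom.degree
      · have hlt : f.num.natDegree < f.denom.natDegree := by
          by_cases hnum0 : f.num = 0
          · rw [hnum0, Polynomial.natDegree_zero]
            rw [hnum0, Polynomial.degree_zero] at h'
            have : f.denom.natDegree ≠ 0 := by
              intro hz
              unfold ratDeg at hD
              rw [hnum0, Polynomial.natDegree_zero, hz] at hD
              simp at hD
            omega
          · exact (Polynomial.natDegree_lt_natDegree_iff hnum0).mpr h'
        have hDn : ratDeg f = f.denom.natDegree := by unfold ratDeg; omega
        rw [if_pos h', hDn]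
        have hc1 : f.num.coeff f.denom.natDegree = 0 :=
          Polynomial.coeff_eq_zero_of_natDegree_lt hlt
        have hc2 : f.denom.coeff f.denom.natDegree = 1 := f.monic_denom.coeff_natDegree
        rw [hc1, hc2, mul_one, zero_sub, neg_eq_zero, OnePoint.coe_eq_coe]
        exact ⟨fun h'' => h''.symm, fun h'' => h''.symm⟩
      · -- degrees equal
        have hdeq : f.num.degree = f.denom.degree := le_antisymm (not_lt.mp h) (not_lt.mp h')
        have hnum0 : f.num ≠ 0 := by
          intro h0
          rw [h0, Polynomial.degree_zero] at hdeq
          exact hden (Polynomial.degree_eq_bot.mp hdeq.symm)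
        have hneq : f.num.natDegree = f.denom.natDegree := Polynomial.natDegree_eq_of_degree_eq hdeq
        have hDn : ratDeg f = f.num.natDegree := by unfold ratDeg; omega
        rw [if_neg h', hDn]
        have hc1 : f.num.coeff f.num.natDegree = f.num.leadingCoeff := Polynomial.coeff_natDegree
        have hc2 : f.denom.coeff f.num.natDegree = 1 := by
          rw [hneq]; exact f.monic_denom.coeff_natDegree
        rw [hc1, hc2, mul_one, f.monic_denom.leadingCoeff, div_one, OnePoint.coe_eq_coe,
          sub_eq_zero]

lemma wron_ne_zero (hfc : ¬ ∃ c : ℂ, f = RatFunc.C c) : wron f ≠ 0 := by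
  intro h
  have hnum0 : f.num ≠ 0 := num_ne_zero hfc
  have heq : derivative f.num * f.denom = f.num * derivative f.denom := by
    rwa [wron, sub_eq_zero] at h
  have hdvd : f.num ∣ derivative f.num * f.denom := ⟨derivative f.denom, heq⟩
  have hdvd2 : f.num ∣ derivative f.num :=
    (f.isCoprime_num_denom).dvd_of_dvd_mul_right hdvd
  have hder0 : derivative f.num = 0 := by
    by_contra hd
    have := Polynomial.degree_le_of_dvd hdvd2 hd
    exact absurd (lt_of_le_of_lt this (Polynomial.degree_derivative_lt hnum0)) (lt_irrefl _)
  have hder0' : derivative f.denom = 0 := by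
    rw [hder0, zero_mul] at heq
    rcases mul_eq_zero.mp heq.symm with h1 | h1
    · exact absurd h1 hnum0
    · exact h1
  have h1 : f.num.natDegree = 0 := Polynomial.natDegree_eq_zero_of_derivative_eq_zero hder0
  have h2 : f.denom.natDegree = 0 := Polynomial.natDegree_eq_zero_of_derivative_eq_zero hder0'
  have : ratDeg f = 0 := by unfold ratDeg; omega
  have := one_le_ratDeg hfc
  omega

lemma wron_eq (f : RatFunc ℂ) (a : ℂ) :
    wron f = derivative (fpoly f a) * f.denom - fpoly f a * derivative f.denom := by
  rw [fpoly_coe, wron]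
  simp only [Polynomial.derivative_sub, Polynomial.derivative_mul, Polynomial.derivative_C]
  ring

lemma pow_dvd_wron (f : RatFunc ℂ) (α : OnePoint ℂ) (z : ℂ) :
    (Polynomial.X - Polynomial.C z) ^ ((fpoly f α).rootMultiplicity z - 1) ∣ wron f := by
  set g := fpoly f α with hg
  set e := g.rootMultiplicity z with he
  have h1 : (Polynomial.X - Polynomial.C z) ^ e ∣ g := Polynomial.pow_rootMultiplicity_dvd g z
  have h2 : (Polynomial.X - Polynomial.C z) ^ (e - 1) ∣ g :=
    dvd_trans (pow_dvd_pow _ (Nat.sub_le e 1)) h1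
  have h3 : (Polynomial.X - Polynomial.C z) ^ (e - 1) ∣ derivative g :=
    Polynomial.pow_sub_one_dvd_derivative_of_pow_dvd h1
  induction α using OnePoint.rec with
  | infty =>
    rw [wron]
    rw [hg, fpoly_infty] at h2 h3
    exact dvd_sub (Dvd.dvd.mul_left h2 _) (Dvd.dvd.mul_left h3 _)
  | coe a =>
    rw [wron_eq f a, ← hg]
    exact dvd_sub (Dvd.dvd.mul_right h3 _) (Dvd.dvd.mul_right h2 _)

lemma natDegree_term_le {g w : ℂ[X]} {A B : ℕ} (h1 : 1 ≤ A + B)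
    (hg : g.natDegree ≤ A) (hw : w.natDegree ≤ B) :
    (derivative g * w).natDegree + 1 ≤ A + B := by
  by_cases hg0 : derivative g = 0
  · rw [hg0, zero_mul, Polynomial.natDegree_zero]; omega
  · have hd1 : 1 ≤ g.natDegree := by
      by_contra hc
      push_neg at hc
      interval_cases hgn : g.natDegree
      · obtain ⟨c, rfl⟩ := Polynomial.natDegree_eq_zero.mp hgn
        simp at hg0
    have hmul := Polynomial.natDegree_mul_le (p := derivative g) (q := w)
    have hdg : (derivative g).natDegree ≤ g.natDegree - 1 := Polynomial.natDegree_derivative_le g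
    omega

lemma natDegree_wron_lt (hfc : ¬ ∃ c : ℂ, f = RatFunc.C c) (α : OnePoint ℂ) :
    (wron f).natDegree < ratDeg f + (fpoly f α).natDegree := by
  have hD : 1 ≤ ratDeg f := one_le_ratDeg hfc
  have hvD : f.denom.natDegree ≤ ratDeg f := le_max_right _ _
  have huD : f.num.natDegree ≤ ratDeg f := le_max_left _ _
  induction α using OnePoint.rec with
  | infty =>
    rw [fpoly_infty, wron]
    refine lt_of_le_of_lt (Polynomial.natDegree_sub_le _ _) ?_
    rw [max_lt_iff]
    constructor
    · have := natDegree_term_le (g := f.num) (w := f.denom) (A := ratDeg f)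
        (B := f.denom.natDegree) (by omega) huD (le_refl _)
      omega
    · rw [mul_comm]
      have := natDegree_term_le (g := f.denom) (w := f.num) (A := f.denom.natDegree)
        (B := ratDeg f) (by omega) (le_refl _) huD
      omega
  | coe a =>
    rw [wron_eq f a]
    refine lt_of_le_of_lt (Polynomial.natDegree_sub_le _ _) ?_
    rw [max_lt_iff]
    constructor
    · have := natDegree_term_le (g := fpoly f (a : OnePoint ℂ)) (w := f.denom)
        (A := (fpoly f (a : OnePoint ℂ)).natDegree) (B := ratDeg f) (by omega) (le_refl _) hvD
      omega
    · rw [mul_comm]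
      have := natDegree_term_le (g := f.denom) (w := fpoly f (a : OnePoint ℂ))
        (A := ratDeg f) (B := (fpoly f (a : OnePoint ℂ)).natDegree) (by omega) hvD (le_refl _)
      omega

lemma sum_count_le (s : Finset ℂ) (M : Multiset ℂ) :
    ∑ z ∈ s, M.count z ≤ Multiset.card M := by
  classical
  have h1 : ∑ z ∈ s, M.count z = ∑ z ∈ s ∩ M.toFinset, M.count z := by
    refine (Finset.sum_subset (Finset.inter_subset_left) ?_).symm
    intro x hx hx2
    rw [Multiset.count_eq_zero]
    intro hc
    exact hx2 (Finset.mem_inter.mpr ⟨hx, Multiset.mem_toFinset.mpr hc⟩)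
  rw [h1, ← Multiset.toFinset_sum_count_eq M]
  exact Finset.sum_le_sum_of_subset (Finset.inter_subset_right)

lemma roots_card (g : ℂ[X]) : Multiset.card g.roots = g.natDegree :=
  Polynomial.splits_iff_card_roots.mp (IsAlgClosed.splits g)

lemma card_toFinset_add_ram (g : ℂ[X]) :
    g.roots.toFinset.card + ∑ z ∈ g.roots.toFinset, (g.rootMultiplicity z - 1)
      = g.natDegree := by
  classical
  have h1 := Multiset.toFinset_sum_count_eq g.roots
  have h2 : ∑ z ∈ g.roots.toFinset, g.roots.count z
      = ∑ z ∈ g.roots.toFinset, ((g.rootMultiplicity z - 1) + 1) := by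
    refine Finset.sum_congr rfl fun z hz => ?_
    have hmem := Multiset.mem_toFinset.mp hz
    have hpos : 1 ≤ g.roots.count z := Multiset.one_le_count_iff_mem.mpr hmem
    rw [Polynomial.count_roots] at hpos ⊢
    omega
  rw [h2, Finset.sum_add_distrib, Finset.sum_const, smul_eq_mul, mul_one] at h1
  rw [← roots_card g, ← h1]
  omega

lemma evalSphere_eq_of_root {f : RatFunc ℂ} {α : OnePoint ℂ} {z : ℂ}
    (h : z ∈ (fpoly f α).roots.toFinset) : evalSphere f z = α := by
  have := (mem_fiber_coe f z α).mpr
    (Polynomial.isRoot_of_mem_roots (Multiset.mem_toFinset.mp h))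
  simpa using this

/-- The ramification sum over any family of fibers is bounded by the degree of the
Wronskian. -/
lemma ram_sum_le (hfc : ¬ ∃ c : ℂ, f = RatFunc.C c) (T : Finset (OnePoint ℂ)) :
    ∑ α ∈ T, ∑ z ∈ (fpoly f α).roots.toFinset, ((fpoly f α).rootMultiplicity z - 1)
      ≤ (wron f).natDegree := by
  classical
  have hW : wron f ≠ 0 := wron_ne_zero hfc
  have hdisj : ∀ α₁ ∈ T, ∀ α₂ ∈ T, α₁ ≠ α₂ →
      Disjoint ((fpoly f α₁).roots.toFinset) ((fpoly f α₂).roots.toFinset) := by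
    intro α₁ _ α₂ _ hne
    rw [Finset.disjoint_left]
    intro z hz1 hz2
    exact hne ((evalSphere_eq_of_root hz1).symm.trans (evalSphere_eq_of_root hz2))
  have hbound : ∀ α ∈ T, ∀ z ∈ (fpoly f α).roots.toFinset,
      (fpoly f α).rootMultiplicity z - 1 ≤ (wron f).roots.count z := by
    intro α _ z _
    rw [Polynomial.count_roots, Polynomial.le_rootMultiplicity_iff hW]
    exact pow_dvd_wron f α z
  calc ∑ α ∈ T, ∑ z ∈ (fpoly f α).roots.toFinset, ((fpoly f α).rootMultiplicity z - 1)
      ≤ ∑ α ∈ T, ∑ z ∈ (fpoly f α).roots.toFinset, (wron f).roots.count z := by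
        refine Finset.sum_le_sum fun α hα => Finset.sum_le_sum fun z hz => ?_
        exact hbound α hα z hz
    _ = ∑ z ∈ T.biUnion (fun α => (fpoly f α).roots.toFinset), (wron f).roots.count z :=
        (Finset.sum_biUnion hdisj).symm
    _ ≤ Multiset.card (wron f).roots := sum_count_le _ _
    _ ≤ (wron f).natDegree := Polynomial.card_roots' _

/-- Lower bound: the union of the fibers over `T` is large. -/
lemma lowerBound (hfc : ¬ ∃ c : ℂ, f = RatFunc.C c) (T : Finset (OnePoint ℂ)) :
    ((T.card : ℤ) - 2) * (ratDeg f : ℤ) + 2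
      ≤ ((T.biUnion (fun α => (fpoly f α).roots.toFinset)).card : ℤ)
        + (if evalSphere f ∞ ∈ T then 1 else 0) := by
  classical
  have hD : 1 ≤ ratDeg f := one_le_ratDeg hfc
  set β := evalSphere f ∞ with hβ
  set D := ratDeg f with hDdef
  have hdfull : ∀ α ∈ T, α ≠ β → (fpoly f α).natDegree = D := by
    intro α _ hne
    have h1 : ¬ (fpoly f α).natDegree < D := by
      intro h
      exact hne ((evalSphere_infty_eq_iff hfc α).mpr h).symm
    have h2 := natDegree_fpoly_le f α
    omega
  have hdβ : (fpoly f β).natDegree < D := (evalSphere_infty_eq_iff hfc β).mp rfl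
  have hdisj : ∀ α₁ ∈ T, ∀ α₂ ∈ T, α₁ ≠ α₂ →
      Disjoint ((fpoly f α₁).roots.toFinset) ((fpoly f α₂).roots.toFinset) := by
    intro α₁ _ α₂ _ hne
    rw [Finset.disjoint_left]
    intro z hz1 hz2
    exact hne ((evalSphere_eq_of_root hz1).symm.trans (evalSphere_eq_of_root hz2))
  have hcard : (T.biUnion (fun α => (fpoly f α).roots.toFinset)).card
      = ∑ α ∈ T, (fpoly f α).roots.toFinset.card := Finset.card_biUnion hdisj
  have hterm : ∀ α ∈ T, (fpoly f α).roots.toFinset.card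
      + ∑ z ∈ (fpoly f α).roots.toFinset, ((fpoly f α).rootMultiplicity z - 1)
      = (fpoly f α).natDegree := fun α _ => card_toFinset_add_ram _
  set nc := ∑ α ∈ T, (fpoly f α).roots.toFinset.card with hnc
  set nr := ∑ α ∈ T, ∑ z ∈ (fpoly f α).roots.toFinset,
      ((fpoly f α).rootMultiplicity z - 1) with hnr
  have hsum1 : nc + nr = ∑ α ∈ T, (fpoly f α).natDegree := by
    rw [hnc, hnr, ← Finset.sum_add_distrib]
    exact Finset.sum_congr rfl hterm
  have hram : nr ≤ (wron f).natDegree := ram_sum_le hfc T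
  have hwlt : (wron f).natDegree < D + (fpoly f β).natDegree := natDegree_wron_lt hfc β
  rw [hcard]
  by_cases hmem : β ∈ T
  · rw [if_pos hmem]
    set m := (T.erase β).card with hm
    have hmcard : m + 1 = T.card := Finset.card_erase_add_one hmem
    have hsum2 : nc + nr = m * D + (fpoly f β).natDegree := by
      rw [hsum1, ← Finset.sum_erase_add T _ hmem]
      congr 1
      rw [Finset.sum_congr rfl (fun α hα => hdfull α (Finset.mem_of_mem_erase hα)
        (Finset.ne_of_mem_erase hα)), Finset.sum_const, smul_eq_mul]
    have hz : (nc : ℤ) + (nr : ℤ) = (m : ℤ) * (D : ℤ) + ((fpoly f β).natDegree : ℤ) := by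
      exact_mod_cast hsum2
    have hk : (T.card : ℤ) = (m : ℤ) + 1 := by exact_mod_cast hmcard.symm
    rw [hk]
    have hexp : ((m : ℤ) + 1 - 2) * (D : ℤ) = (m : ℤ) * (D : ℤ) - (D : ℤ) := by ring
    rw [hexp]
    have hz2 : ((nr : ℕ) : ℤ) ≤ ((wron f).natDegree : ℤ) := by exact_mod_cast hram
    have hz3 : ((wron f).natDegree : ℤ) < (D : ℤ) + ((fpoly f β).natDegree : ℤ) := by
      exact_mod_cast hwlt
    linarith
  · rw [if_neg hmem]
    have hsum2 : nc + nr = T.card * D := by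
      rw [hsum1, Finset.sum_congr rfl (fun α hα => hdfull α hα (by rintro rfl; exact hmem hα)),
        Finset.sum_const, smul_eq_mul]
    have hz : (nc : ℤ) + (nr : ℤ) = (T.card : ℤ) * (D : ℤ) := by exact_mod_cast hsum2
    have hexp : ((T.card : ℤ) - 2) * (D : ℤ) = (T.card : ℤ) * (D : ℤ) - 2 * (D : ℤ) := by ring
    rw [hexp]
    have hz2 : ((nr : ℕ) : ℤ) ≤ ((wron f).natDegree : ℤ) := by exact_mod_cast hram
    have hz3 : ((wron f).natDegree : ℤ) < (D : ℤ) + ((fpoly f β).natDegree : ℤ) := by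
      exact_mod_cast hwlt
    have hz4 : ((fpoly f β).natDegree : ℤ) ≤ (D : ℤ) - 1 := by
      have := Nat.le_sub_one_of_lt hdβ
      omega
    linarith

lemma resultant_ne_zero {p q : RatFunc ℂ} (hne : p ≠ q) :
    p.num * q.denom - q.num * p.denom ≠ 0 := by
  intro h
  rw [sub_eq_zero] at h
  apply hne
  rw [← RatFunc.num_div_denom p, ← RatFunc.num_div_denom q, div_eq_div_iff, ← map_mul, ← map_mul,
    h]
  · exact RatFunc.algebraMap_ne_zero p.denom_ne_zero
  · exact RatFunc.algebraMap_ne_zero q.denom_ne_zero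

lemma evalq_infty_eq {p q : RatFunc ℂ} {T : Finset (OnePoint ℂ)}
    (hT : ∀ α ∈ T, evalSphere p ⁻¹' {α} = evalSphere q ⁻¹' {α})
    (h : evalSphere p ∞ ∈ T) : evalSphere q ∞ = evalSphere p ∞ := by
  have hinfm : ∞ ∈ evalSphere p ⁻¹' {evalSphere p ∞} := rfl
  rw [hT _ h] at hinfm
  rwa [Set.mem_preimage, Set.mem_singleton_iff] at hinfm

lemma infty_mem_iff {p q : RatFunc ℂ} {T : Finset (OnePoint ℂ)}
    (hT : ∀ α ∈ T, evalSphere p ⁻¹' {α} = evalSphere q ⁻¹' {α}) :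
    (evalSphere p ∞ ∈ T ↔ evalSphere q ∞ ∈ T) := by
  have hT' : ∀ α ∈ T, evalSphere q ⁻¹' {α} = evalSphere p ⁻¹' {α} :=
    fun α hα => (hT α hα).symm
  constructor
  · intro h; rw [evalq_infty_eq hT h]; exact h
  · intro h; rw [evalq_infty_eq hT' h]; exact h

lemma fiber_transfer {p q : RatFunc ℂ} (hpc : ¬ ∃ c : ℂ, p = RatFunc.C c)
    (hqc : ¬ ∃ c : ℂ, q = RatFunc.C c) (α : OnePoint ℂ)
    (h : evalSphere p ⁻¹' {α} = evalSphere q ⁻¹' {α}) :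
    (fpoly p α).roots.toFinset = (fpoly q α).roots.toFinset := by
  ext z
  rw [Multiset.mem_toFinset, Multiset.mem_toFinset, Polynomial.mem_roots',
    Polynomial.mem_roots']
  constructor
  · rintro ⟨_, hz⟩
    refine ⟨fpoly_ne_zero hqc α, ?_⟩
    have := (mem_fiber_coe p z α).mpr hz
    rw [h] at this
    exact (mem_fiber_coe q z α).mp this
  · rintro ⟨_, hz⟩
    refine ⟨fpoly_ne_zero hpc α, ?_⟩
    have := (mem_fiber_coe q z α).mpr hz
    rw [← h] at this
    exact (mem_fiber_coe p z α).mp this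

lemma upperBound {p q : RatFunc ℂ} (hpc : ¬ ∃ c : ℂ, p = RatFunc.C c)
    (hqc : ¬ ∃ c : ℂ, q = RatFunc.C c) (hne : p ≠ q) (T : Finset (OnePoint ℂ))
    (hT : ∀ α ∈ T, evalSphere p ⁻¹' {α} = evalSphere q ⁻¹' {α}) :
    ((T.biUnion (fun α => (fpoly p α).roots.toFinset)).card : ℤ)
      + (if evalSphere p ∞ ∈ T then 1 else 0) ≤ (ratDeg p : ℤ) + (ratDeg q : ℤ) := by
  classical
  set R := p.num * q.denom - q.num * p.denom with hRdef
  have hR : R ≠ 0 := resultant_ne_zero hne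
  have hm1 : p.num.natDegree ≤ ratDeg p := le_max_left _ _
  have hm2 : p.denom.natDegree ≤ ratDeg p := le_max_right _ _
  have hm3 : q.num.natDegree ≤ ratDeg q := le_max_left _ _
  have hm4 : q.denom.natDegree ≤ ratDeg q := le_max_right _ _
  -- every point of the union is a root of R
  have hsub : T.biUnion (fun α => (fpoly p α).roots.toFinset) ⊆ R.roots.toFinset := by
    intro z hz
    obtain ⟨α, hα, hz⟩ := Finset.mem_biUnion.mp hz
    have h1 : (fpoly p α).eval z = 0 :=
      Polynomial.isRoot_of_mem_roots (Multiset.mem_toFinset.mp hz)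
    have hmemp := (mem_fiber_coe p z α).mpr h1
    have hmemq := hmemp
    rw [hT α hα] at hmemq
    have h2 : (fpoly q α).eval z = 0 := (mem_fiber_coe q z α).mp hmemq
    rw [Multiset.mem_toFinset, Polynomial.mem_roots']
    refine ⟨hR, ?_⟩
    induction α using OnePoint.rec with
    | infty =>
      rw [fpoly_infty] at h1 h2
      simp only [Polynomial.IsRoot, hRdef, Polynomial.eval_sub, Polynomial.eval_mul, h1, h2,
        mul_zero, zero_mul, sub_zero]
    | coe a =>
      rw [fpoly_coe] at h1 h2
      simp only [Polynomial.eval_sub, Polynomial.eval_mul, Polynomial.eval_C] at h1 h2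
      simp only [Polynomial.IsRoot, hRdef, Polynomial.eval_sub, Polynomial.eval_mul]
      linear_combination (q.denom.eval z) * h1 - (p.denom.eval z) * h2
  have hcard : (T.biUnion (fun α => (fpoly p α).roots.toFinset)).card ≤ R.natDegree := by
    calc (T.biUnion (fun α => (fpoly p α).roots.toFinset)).card
        ≤ R.roots.toFinset.card := Finset.card_le_card hsub
      _ ≤ Multiset.card R.roots := Multiset.toFinset_card_le _
      _ ≤ R.natDegree := Polynomial.card_roots' _
  by_cases hmem : evalSphere p ∞ ∈ T
  · rw [if_pos hmem]
    set β := evalSphere p ∞ with hβ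
    have hdp : (fpoly p β).natDegree < ratDeg p := (evalSphere_infty_eq_iff hpc β).mp rfl
    have hdq : (fpoly q β).natDegree < ratDeg q :=
      (evalSphere_infty_eq_iff hqc β).mp (evalq_infty_eq hT hmem)
    -- natDegree R + 1 ≤ ratDeg p + ratDeg q
    have hdeg' : ∀ γ : OnePoint ℂ, (fpoly p γ).natDegree < ratDeg p →
        (fpoly q γ).natDegree < ratDeg q → R.natDegree + 1 ≤ ratDeg p + ratDeg q := by
      intro γ hdp hdq
      induction γ using OnePoint.rec with
      | infty =>
        rw [fpoly_infty] at hdp hdq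
        have b1 := Polynomial.natDegree_mul_le (p := p.num) (q := q.denom)
        have b2 := Polynomial.natDegree_mul_le (p := q.num) (q := p.denom)
        have b3 : R.natDegree ≤ max (p.num * q.denom).natDegree (q.num * p.denom).natDegree :=
          Polynomial.natDegree_sub_le _ _
        have b4 : R.natDegree ≤ ratDeg p + ratDeg q - 1 :=
          b3.trans (max_le (by omega) (by omega))
        have hD : 1 ≤ ratDeg p := one_le_ratDeg hpc
        omega
      | coe a =>
        have hiden : R = fpoly p (a : OnePoint ℂ) * q.denom
            - fpoly q (a : OnePoint ℂ) * p.denom := by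
          rw [hRdef, fpoly_coe, fpoly_coe]; ring
        have b1 := Polynomial.natDegree_mul_le (p := fpoly p (a : OnePoint ℂ)) (q := q.denom)
        have b2 := Polynomial.natDegree_mul_le (p := fpoly q (a : OnePoint ℂ)) (q := p.denom)
        have b3 : R.natDegree ≤ max (fpoly p (a : OnePoint ℂ) * q.denom).natDegree
            ((fpoly q (a : OnePoint ℂ) * p.denom)).natDegree := by
          rw [hiden]; exact Polynomial.natDegree_sub_le _ _
        have d1 := natDegree_fpoly_le p (a : OnePoint ℂ)
        have d2 := natDegree_fpoly_le q (a : OnePoint ℂ)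
        have b4 : R.natDegree ≤ ratDeg p + ratDeg q - 1 :=
          b3.trans (max_le (by omega) (by omega))
        have hD : 1 ≤ ratDeg p := one_le_ratDeg hpc
        omega
    have hdeg : R.natDegree + 1 ≤ ratDeg p + ratDeg q := hdeg' β hdp hdq
    have : ((T.biUnion (fun α => (fpoly p α).roots.toFinset)).card : ℤ) + 1
        ≤ (R.natDegree : ℤ) + 1 := by exact_mod_cast Nat.add_le_add_right hcard 1
    have h2 : ((R.natDegree : ℤ) + 1) ≤ (ratDeg p : ℤ) + (ratDeg q : ℤ) := by exact_mod_cast hdeg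
    omega
  · rw [if_neg hmem, add_zero]
    have hdeg : R.natDegree ≤ ratDeg p + ratDeg q := by
      have b1 := Polynomial.natDegree_mul_le (p := p.num) (q := q.denom)
      have b2 := Polynomial.natDegree_mul_le (p := q.num) (q := p.denom)
      have b3 : R.natDegree ≤ max (p.num * q.denom).natDegree (q.num * p.denom).natDegree :=
        Polynomial.natDegree_sub_le _ _
      exact b3.trans (max_le (by omega) (by omega))
    exact_mod_cast hcard.trans hdeg

/-- Main counting inequality for a finite set of common fibers. -/
lemma key {p q : RatFunc ℂ} (hpc : ¬ ∃ c : ℂ, p = RatFunc.C c)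
    (hqc : ¬ ∃ c : ℂ, q = RatFunc.C c) (hne : p ≠ q) (T : Finset (OnePoint ℂ))
    (hT : ∀ α ∈ T, evalSphere p ⁻¹' {α} = evalSphere q ⁻¹' {α}) :
    ((T.card : ℤ) - 2) * (max (ratDeg p) (ratDeg q) : ℤ)
      ≤ -2 + (ratDeg p : ℤ) + (ratDeg q : ℤ) := by
  classical
  have h1 := lowerBound hpc T
  have h2 := lowerBound hqc T
  have hU : T.biUnion (fun α => (fpoly q α).roots.toFinset)
      = T.biUnion (fun α => (fpoly p α).roots.toFinset) := by
    refine Finset.biUnion_congr rfl fun α hα => ?_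
    exact (fiber_transfer hpc hqc α (hT α hα)).symm
  have hup := upperBound hpc hqc hne T hT
  rw [hU] at h2
  rw [if_congr (infty_mem_iff hT).symm rfl rfl] at h2
  rcases max_cases ((ratDeg p : ℤ)) ((ratDeg q : ℤ)) with ⟨hmax, _⟩ | ⟨hmax, _⟩ <;>
    rw [hmax] <;> linarith

end Stmt10Aux

open Stmt10Aux in
/-- Genus-0 case of the main theorem: for distinct nonconstant rational functions
`p, q` on the Riemann sphere and `S = {α : p⁻¹(α) = q⁻¹(α)}`,
`(|S| - 2)·max(deg p, deg q) ≤ -2 + deg p + deg q`; in particular `|S| ≤ 3`. -/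
theorem stmt_10 (p q : RatFunc ℂ)
    (hpc : ¬ ∃ c : ℂ, p = RatFunc.C c) (hqc : ¬ ∃ c : ℂ, q = RatFunc.C c) (hne : p ≠ q)
    (S : Set (OnePoint ℂ))
    (hS : S = {α : OnePoint ℂ | evalSphere p ⁻¹' {α} = evalSphere q ⁻¹' {α}}) :
    ((S.ncard : ℤ) - 2) * (max (ratDeg p) (ratDeg q) : ℤ)
      ≤ -2 + (ratDeg p : ℤ) + (ratDeg q : ℤ) ∧ S.ncard ≤ 3 := by
  have hDp : 1 ≤ ratDeg p := one_le_ratDeg hpc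
  have hDq : 1 ≤ ratDeg q := one_le_ratDeg hqc
  by_cases hfin : S.Finite
  · have hT : ∀ α ∈ hfin.toFinset, evalSphere p ⁻¹' {α} = evalSphere q ⁻¹' {α} := by
      intro α hα
      rw [Set.Finite.mem_toFinset, hS] at hα
      exact hα
    have hk := key hpc hqc hne hfin.toFinset hT
    have hcard : S.ncard = hfin.toFinset.card := Set.ncard_eq_toFinset_card S hfin
    rw [hcard]
    refine ⟨hk, ?_⟩
    -- |S| ≤ 3
    by_contra hcon
    push_neg at hcon
    have h4 : (4 : ℤ) ≤ (hfin.toFinset.card : ℤ) := by exact_mod_cast hcon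
    have hM : (1 : ℤ) ≤ (max (ratDeg p : ℤ) (ratDeg q : ℤ)) := by
      have : (1 : ℤ) ≤ (ratDeg p : ℤ) := by exact_mod_cast hDp
      exact this.trans (le_max_left _ _)
    have hp' : (ratDeg p : ℤ) ≤ max (ratDeg p : ℤ) (ratDeg q : ℤ) := le_max_left _ _
    have hq' : (ratDeg q : ℤ) ≤ max (ratDeg p : ℤ) (ratDeg q : ℤ) := le_max_right _ _
    nlinarith [hk]
  · have h0 : S.ncard = 0 := Set.Infinite.ncard hfin
    rw [h0]
    refine ⟨?_, by omega⟩
    have hM : (1 : ℤ) ≤ (max (ratDeg p : ℤ) (ratDeg q : ℤ)) := by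
      have : (1 : ℤ) ≤ (ratDeg p : ℤ) := by exact_mod_cast hDp
      exact this.trans (le_max_left _ _)
    have h1 : (1 : ℤ) ≤ (ratDeg p : ℤ) := by exact_mod_cast hDp
    have h2 : (1 : ℤ) ≤ (ratDeg q : ℤ) := by exact_mod_cast hDq
    push_cast
    nlinarith
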